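/- Let G be a group generated by a finite set {g_1,…,g_n}, let F_n be the free group on {x_1,…,x_n}, and let φ: F_n → G be the homomorphism with φ(x_i) = g_i. If D is a distinct difference configuration in G of diameter at most d (with respect to the generating set), then there exists a distinct difference configuration D̂ in F_n with |D̂| = |D| and diameter at most 2d. Hence |D| ≤ m(n, 2d), the maximum size of a DDC of diameter at most 2d in F_n. -/

import Mathlib

/-- A subset `D` of a group is a distinct difference configuration. -/
def IsDDC {G : Type*} [Group G] (D : Set G) : Prop :=
  ∀ g ∈ D, ∀ h ∈ D, ∀ g' ∈ D, ∀ h' ∈ D,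
    g ≠ h → g' ≠ h' → g⁻¹ * h = g'⁻¹ * h' → g = g' ∧ h = h'

/-- Word length with respect to a generating set `X`. -/
noncomputable def wlen {G : Type*} [Group G] (X : Set G) (g : G) : ℕ :=
  sInf {ℓ : ℕ | ∃ w : List G, w.length = ℓ ∧ (∀ x ∈ w, x ∈ X ∪ X⁻¹) ∧ w.prod = g}

/-- `maxDDC n d` is the maximum cardinality of a DDC of diameter at most `d`
in the free group of rank `n`. -/
noncomputable def maxDDC (n d : ℕ) : ℕ :=
  sSup {k : ℕ | ∃ D : Set (FreeGroup (Fin n)), IsDDC D ∧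
    (∀ g ∈ D, ∀ h ∈ D, (g⁻¹ * h).norm ≤ d) ∧ D.ncard = k}

lemma ball_finite (n m : ℕ) : {x : FreeGroup (Fin n) | x.norm ≤ m}.Finite := by
  have h : {x : FreeGroup (Fin n) | x.norm ≤ m} ⊆
      FreeGroup.toWord ⁻¹' {l : List (Fin n × Bool) | l.length ≤ m} := fun x hx => hx
  exact ((List.finite_length_le _ m).preimage FreeGroup.toWord_injective.injOn).subset h

lemma aux_list (n : ℕ) {G : Type*} [Group G] (g : Fin n → G) (w : List G)
    (hw : ∀ a ∈ w, ∃ y : FreeGroup (Fin n), y.norm ≤ 1 ∧ FreeGroup.lift g y = a) :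
    ∃ y : FreeGroup (Fin n), y.norm ≤ w.length ∧ FreeGroup.lift g y = w.prod := by
  induction w with
  | nil => exact ⟨1, by simp⟩
  | cons a t ih =>
    obtain ⟨ya, hya, hla⟩ := hw a (by simp)
    obtain ⟨yt, hyt, hlt⟩ := ih (fun b hb => hw b (by simp [hb]))
    refine ⟨ya * yt, ?_, by simp [hla, hlt]⟩
    calc (ya * yt).norm ≤ ya.norm + yt.norm := FreeGroup.norm_mul_le _ _
      _ ≤ 1 + t.length := Nat.add_le_add hya hyt
      _ = (a :: t).length := by simp [Nat.add_comm]

lemma exists_preimage (n : ℕ) {G : Type*} [Group G] (g : Fin n → G)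
    (hgen : Subgroup.closure (Set.range g) = ⊤) (x : G) (d : ℕ)
    (hx : wlen (Set.range g) x ≤ d) :
    ∃ y : FreeGroup (Fin n), y.norm ≤ d ∧ FreeGroup.lift g y = x := by
  set S := {ℓ : ℕ | ∃ w : List G, w.length = ℓ ∧
      (∀ a ∈ w, a ∈ Set.range g ∪ (Set.range g)⁻¹) ∧ w.prod = x} with hS
  have hne : S.Nonempty := by
    have hx' : x ∈ Submonoid.closure (Set.range g ∪ (Set.range g)⁻¹) := by
      rw [← Subgroup.closure_toSubmonoid]
      exact hgen ▸ Subgroup.mem_top x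
    obtain ⟨l, hl1, hl2⟩ := Submonoid.exists_list_of_mem_closure hx'
    exact ⟨l.length, l, rfl, hl1, hl2⟩
  have hmem : sInf S ∈ S := Nat.sInf_mem hne
  obtain ⟨w, hwl, hwmem, hwprod⟩ := hmem
  have hlen : w.length ≤ d := by rw [hwl]; exact hx
  obtain ⟨y, hy1, hy2⟩ := aux_list n g w (fun a ha => by
    rcases hwmem a ha with ⟨i, rfl⟩ | h
    · exact ⟨FreeGroup.of i, by simp, by simp⟩
    · rw [Set.mem_inv] at h
      obtain ⟨i, hi⟩ := h
      exact ⟨(FreeGroup.of i)⁻¹, by simp, by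
        simp only [map_inv, FreeGroup.lift_apply_of, hi]; group⟩)
  exact ⟨y, le_trans hy1 hlen, hy2.trans hwprod⟩

theorem stmt16 {G : Type*} [Group G] (n : ℕ) (g : Fin n → G)
    (hgen : Subgroup.closure (Set.range g) = ⊤) (d : ℕ)
    (D : Set G) (hDDC : IsDDC D)
    (hdiam : ∀ a ∈ D, ∀ b ∈ D, wlen (Set.range g) (a⁻¹ * b) ≤ d) :
    (∃ Dhat : Set (FreeGroup (Fin n)), IsDDC Dhat ∧
        (∀ a ∈ Dhat, ∀ b ∈ Dhat, (a⁻¹ * b).norm ≤ 2 * d) ∧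
        (FreeGroup.lift g) '' Dhat = D ∧ Dhat.ncard = D.ncard) ∧
      D.ncard ≤ maxDDC n (2 * d) := by
  classical
  -- boundedness of the maxDDC defining set
  have hbdd : BddAbove {k : ℕ | ∃ D' : Set (FreeGroup (Fin n)), IsDDC D' ∧
      (∀ a ∈ D', ∀ b ∈ D', (a⁻¹ * b).norm ≤ 2 * d) ∧ D'.ncard = k} := by
    refine ⟨{x : FreeGroup (Fin n) | x.norm ≤ 2 * d}.ncard, fun k hk => ?_⟩
    obtain ⟨D', _, hdiam', rfl⟩ := hk
    rcases D'.eq_empty_or_nonempty with rfl | ⟨a, ha⟩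
    · simp
    · have hinj : Set.InjOn (fun h => a⁻¹ * h) D' := fun x _ y _ h =>
        mul_left_cancel h
      rw [← Set.ncard_image_of_injOn hinj]
      refine Set.ncard_le_ncard ?_ (ball_finite n (2 * d))
      rintro _ ⟨b, hb, rfl⟩
      exact hdiam' a ha b hb
  -- main construction
  have hmain : ∃ Dhat : Set (FreeGroup (Fin n)), IsDDC Dhat ∧
      (∀ a ∈ Dhat, ∀ b ∈ Dhat, (a⁻¹ * b).norm ≤ 2 * d) ∧
      (FreeGroup.lift g) '' Dhat = D ∧ Dhat.ncard = D.ncard := by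
    rcases D.eq_empty_or_nonempty with rfl | ⟨h₁, hh₁⟩
    · exact ⟨∅, by intro a ha; simp at ha, by simp, by simp, by simp⟩
    · have hsurj : Function.Surjective (FreeGroup.lift g) := by
        rw [← MonoidHom.range_eq_top, FreeGroup.range_lift_eq_closure, hgen]
      obtain ⟨e₁, he₁⟩ := hsurj h₁
      have hc : ∀ h ∈ D, ∃ y : FreeGroup (Fin n), y.norm ≤ d ∧
          FreeGroup.lift g y = h₁⁻¹ * h := fun h hh =>
        exists_preimage n g hgen _ d (hdiam h₁ hh₁ h hh)
      choose c hc1 hc2 using hc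
      set F : ∀ h ∈ D, FreeGroup (Fin n) := fun h hh => e₁ * c h hh with hF
      have hlift : ∀ h (hh : h ∈ D), FreeGroup.lift g (F h hh) = h := by
        intro h hh
        simp [hF, he₁, hc2 h hh]
      -- use a global function via choice
      set F' : G → FreeGroup (Fin n) := fun h =>
        if hh : h ∈ D then F h hh else 1 with hF'
      have hlift' : ∀ h ∈ D, FreeGroup.lift g (F' h) = h := by
        intro h hh; simp [hF', hh, hlift h hh]
      have hinj : Set.InjOn F' D := by
        intro x hx y hy hxy
        have := hlift' x hx
        rw [hxy, hlift' y hy] at this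
        exact this.symm
      refine ⟨F' '' D, ?_, ?_, ?_, Set.ncard_image_of_injOn hinj⟩
      · rintro _ ⟨p, hp, rfl⟩ _ ⟨q, hq, rfl⟩ _ ⟨p', hp', rfl⟩ _ ⟨q', hq', rfl⟩
          hne hne' heq
        have hpq : p ≠ q := fun h => hne (by rw [h])
        have hpq' : p' ≠ q' := fun h => hne' (by rw [h])
        have heqG : p⁻¹ * q = p'⁻¹ * q' := by
          have := congrArg (FreeGroup.lift g) heq
          simpa [hlift' p hp, hlift' q hq, hlift' p' hp', hlift' q' hq'] using this
        obtain ⟨h1, h2⟩ := hDDC p hp q hq p' hp' q' hq' hpq hpq' heqG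
        rw [h1, h2]
        exact ⟨rfl, rfl⟩
      · rintro _ ⟨p, hp, rfl⟩ _ ⟨q, hq, rfl⟩
        have : (F' p)⁻¹ * F' q = (c p hp)⁻¹ * c q hq := by
          simp [hF', hp, hq, hF]
          done
        rw [this]
        calc ((c p hp)⁻¹ * c q hq).norm ≤ (c p hp)⁻¹.norm + (c q hq).norm :=
              FreeGroup.norm_mul_le _ _
          _ ≤ d + d := by
              rw [FreeGroup.norm_inv_eq]; exact Nat.add_le_add (hc1 p hp) (hc1 q hq)
          _ = 2 * d := by ring
      · ext x
        constructor
        · rintro ⟨_, ⟨p, hp, rfl⟩, rfl⟩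
          rw [hlift' p hp]; exact hp
        · intro hx
          exact ⟨F' x, ⟨x, hx, rfl⟩, hlift' x hx⟩
  refine ⟨hmain, ?_⟩
  obtain ⟨Dhat, h1, h2, h3, h4⟩ := hmain
  rw [← h4]
  exact le_csSup hbdd ⟨Dhat, h1, h2, rfl⟩
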